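/- Suppose ∇_h E(ĥ; s, a) = 0 at ĥ = (ĥ^1, …, ĥ^{L-1}) (with ĥ^0 = s), let ẑ be the unique noise vector with ĥ = h(ẑ; W, s), write μ̂^L = g^L(ĥ^{L-1}; W^L), and assume a ≠ μ̂^L. Then for every l ∈ {1, …, L}, ((A*(s) − μ̂^L)/(a − μ̂^L)) · ∇_{W^l} log π_l(ĥ^{l-1}, ĥ^l; W^l) = −(1/(2σ_L²)) · ∇_{W^l} (A*(s) − g^L(h^{L-1}(ẑ; W, s); W^L))² (with ĥ^L = a); i.e., the modified REINFORCE update with G replaced by (A*(s) − μ̂^L)/(a − μ̂^L) equals 1/(2σ_L²) times the gradient-descent update on the squared error, computed by backpropagation through the reparametrized network. -/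

import Mathlib

/-- The multivariate Gaussian density on `ℝⁿ` with mean `μ` and covariance `σ² I`. -/
noncomputable def gaussDensity {n : ℕ} (σ : ℝ) (μ y : EuclideanSpace ℝ (Fin n)) : ℝ :=
  (Real.sqrt (2 * Real.pi * σ ^ 2))⁻¹ ^ n * Real.exp (-‖y - μ‖ ^ 2 / (2 * σ ^ 2))

/-- The scalar Gaussian density with mean `μ` and variance `σ²`. -/
noncomputable def gauss1 (σ μ y : ℝ) : ℝ :=
  (Real.sqrt (2 * Real.pi * σ ^ 2))⁻¹ * Real.exp (-(y - μ) ^ 2 / (2 * σ ^ 2))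

/-- The reparametrization `h^k(z; V, s)`: `h^0(z; V, s) = s` and
`h^{k+1}(z; V, s) = g^{k+1}(h^k(z; V, s); V^{k+1}) + σ_{k+1} z^{k+1}`. -/
noncomputable def reparam (n dpar : ℕ → ℕ)
    (g : (l : ℕ) → EuclideanSpace ℝ (Fin (dpar l)) →
      EuclideanSpace ℝ (Fin (n (l - 1))) → EuclideanSpace ℝ (Fin (n l)))
    (σ : ℕ → ℝ) (V : (l : ℕ) → EuclideanSpace ℝ (Fin (dpar l)))
    (s : EuclideanSpace ℝ (Fin (n 0))) (z : (l : ℕ) → EuclideanSpace ℝ (Fin (n l))) :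
    (k : ℕ) → EuclideanSpace ℝ (Fin (n k))
  | 0 => s
  | (k + 1) => g (k + 1) (V (k + 1)) (reparam n dpar g σ V s z k) + σ (k + 1) • z (k + 1)

section helpers

open RealInnerProductSpace

variable {Ew : Type*} [NormedAddCommGroup Ew] [NormedSpace ℝ Ew]

lemma my_hasFDerivAt_id (x : Ew) :
    HasFDerivAt (fun y => y) (ContinuousLinearMap.id ℝ Ew) x := hasFDerivAt_id x

lemma log_gaussDensity {m : ℕ} {σ : ℝ} (hσ : 0 < σ) (μ y : EuclideanSpace ℝ (Fin m)) :
    Real.log (gaussDensity σ μ y)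
      = m * Real.log (Real.sqrt (2 * Real.pi * σ ^ 2))⁻¹ + (-(2 * σ ^ 2)⁻¹) * ‖y - μ‖ ^ 2 := by
  have h2 : Real.sqrt (2 * Real.pi * σ ^ 2) ≠ 0 := by positivity
  unfold gaussDensity
  rw [Real.log_mul (pow_ne_zero _ (inv_ne_zero h2)) (Real.exp_ne_zero _), Real.log_pow,
    Real.log_exp]
  ring

lemma log_gauss1 {σ : ℝ} (hσ : 0 < σ) (μ y : ℝ) :
    Real.log (gauss1 σ μ y)
      = Real.log (Real.sqrt (2 * Real.pi * σ ^ 2))⁻¹ + (-(2 * σ ^ 2)⁻¹) * (y - μ) ^ 2 := by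
  have h2 : Real.sqrt (2 * Real.pi * σ ^ 2) ≠ 0 := by positivity
  unfold gauss1
  rw [Real.log_mul (inv_ne_zero h2) (Real.exp_ne_zero _), Real.log_exp]
  ring

lemma hasFDerivAt_log_gaussDensity {m : ℕ} {σ : ℝ} (hσ : 0 < σ)
    {F Y : Ew → EuclideanSpace ℝ (Fin m)} {F' Y' : Ew →L[ℝ] EuclideanSpace ℝ (Fin m)} {w : Ew}
    (hF : HasFDerivAt F F' w) (hY : HasFDerivAt Y Y' w) :
    HasFDerivAt (fun u => Real.log (gaussDensity σ (F u) (Y u)))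
      ((σ ^ 2)⁻¹ • ((innerSL ℝ (Y w - F w)).comp (F' - Y'))) w := by
  have hrw : (fun u => Real.log (gaussDensity σ (F u) (Y u)))
      = fun u => (m : ℝ) * Real.log (Real.sqrt (2 * Real.pi * σ ^ 2))⁻¹
          + (-(2 * σ ^ 2)⁻¹) * ‖Y u - F u‖ ^ 2 :=
    funext fun u => log_gaussDensity hσ _ _
  rw [hrw]
  have h := (((hY.fun_sub hF).norm_sq).const_mul (-(2 * σ ^ 2)⁻¹)).const_add
      ((m : ℝ) * Real.log (Real.sqrt (2 * Real.pi * σ ^ 2))⁻¹)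
  refine h.congr_fderiv (Eq.symm ?_)
  ext v
  have hs : σ ^ 2 ≠ 0 := by positivity
  simp [ContinuousLinearMap.smul_apply, ContinuousLinearMap.comp_apply, two_smul,
    inner_sub_left, real_inner_smul_left]
  ring

lemma hasFDerivAt_log_gauss1 {σ : ℝ} (hσ : 0 < σ) {F : Ew → ℝ} {F' : Ew →L[ℝ] ℝ} {w : Ew}
    (y : ℝ) (hF : HasFDerivAt F F' w) :
    HasFDerivAt (fun u => Real.log (gauss1 σ (F u) y))
      (((σ ^ 2)⁻¹ * (y - F w)) • F') w := by
  have hrw : (fun u => Real.log (gauss1 σ (F u) y))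
      = fun u => Real.log (Real.sqrt (2 * Real.pi * σ ^ 2))⁻¹
          + (-(2 * σ ^ 2)⁻¹) * (y - F u) ^ 2 :=
    funext fun u => log_gauss1 hσ _ _
  rw [hrw]
  have hsq : HasFDerivAt (fun u => (y - F u) ^ 2)
      ((y - F w) • (-F') + (y - F w) • (-F')) w := by
    have hrw2 : (fun u => (y - F u) ^ 2) = fun u => (y - F u) * (y - F u) := by
      funext u; ring
    rw [hrw2]
    exact (hF.const_sub y).mul (hF.const_sub y)
  have h := (hsq.const_mul (-(2 * σ ^ 2)⁻¹)).const_add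
      (Real.log (Real.sqrt (2 * Real.pi * σ ^ 2))⁻¹)
  refine h.congr_fderiv (Eq.symm ?_)
  ext v
  have hs : σ ^ 2 ≠ 0 := by positivity
  simp
  ring

lemma hasFDerivAt_sq_sub {c : ℝ} {F : Ew → ℝ} {F' : Ew →L[ℝ] ℝ} {w : Ew}
    (hF : HasFDerivAt F F' w) :
    HasFDerivAt (fun u => (c - F u) ^ 2) ((-2 * (c - F w)) • F') w := by
  have h2 := (hF.const_sub c).fun_mul (hF.const_sub c)
  have hrw : (fun u => (c - F u) ^ 2) = fun u => (c - F u) * (c - F u) := by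
    funext u; ring
  rw [hrw]
  refine h2.congr_fderiv (Eq.symm ?_)
  ext v
  simp
  ring

end helpers

open RealInnerProductSpace

set_option maxHeartbeats 1000000 in
/-- **Theorem 3 of the paper.** Network with normally distributed hidden layers
`π_l = N(·; g^l(h^{l-1}; W^l), σ_l² I)` and a single normally distributed output unit
`π_L(h^{L-1}, a; W^L) = N(a; g^L(h^{L-1}; W^L), σ_L²)`; `A*` is the target-output function.
Suppose `∇_h E(ĥ; s, a) = 0` (with `ĥ^0 = s`), let `ẑ` be the unique noise vector with
`ĥ = h(ẑ; W, s)`, write `μ̂^L = g^L(ĥ^{L-1}; W^L)`, and assume `a ≠ μ̂^L`.  Then for every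
`l ∈ {1, …, L}` (the cases `l ≤ L−1` and `l = L` are the two conjuncts),
`((A*(s) − μ̂^L)/(a − μ̂^L)) ∇_{W^l} log π_l(ĥ^{l-1}, ĥ^l; W^l)
  = −(1/(2σ_L²)) ∇_{W^l} (A*(s) − g^L(h^{L-1}(ẑ; W, s); W^L))²`. -/
theorem stmt9 (L : ℕ) (hL : 1 ≤ L) (n dpar : ℕ → ℕ)
    (g : (l : ℕ) → EuclideanSpace ℝ (Fin (dpar l)) →
      EuclideanSpace ℝ (Fin (n (l - 1))) → EuclideanSpace ℝ (Fin (n l)))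
    (σ : ℕ → ℝ) (hσ : ∀ l ∈ Finset.Icc 1 (L - 1), 0 < σ l)
    (hgdiff₁ : ∀ l ∈ Finset.Icc 1 (L - 1), ∀ w, Differentiable ℝ (g l w))
    (hgdiff₂ : ∀ l ∈ Finset.Icc 1 (L - 1), ∀ x, Differentiable ℝ (fun w => g l w x))
    (gL : EuclideanSpace ℝ (Fin (dpar L)) → EuclideanSpace ℝ (Fin (n (L - 1))) → ℝ)
    (σL : ℝ) (hσL : 0 < σL)
    (hgLdiff₁ : ∀ w, Differentiable ℝ (gL w))
    (hgLdiff₂ : ∀ x, Differentiable ℝ (fun w => gL w x))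
    (Astar : EuclideanSpace ℝ (Fin (n 0)) → ℝ)
    (W : (l : ℕ) → EuclideanSpace ℝ (Fin (dpar l)))
    (s : EuclideanSpace ℝ (Fin (n 0))) (a : ℝ) (C : ℝ)
    (hhat : (l : ℕ) → EuclideanSpace ℝ (Fin (n l))) (hs : hhat 0 = s)
    (hstat : ∀ k ∈ Finset.Icc 1 (L - 1),
      gradient (fun x : EuclideanSpace ℝ (Fin (n k)) =>
        -((∑ j ∈ Finset.Icc 1 (L - 1),
            Real.log (gaussDensity (σ j) (g j (W j) (Function.update hhat k x (j - 1)))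
              (Function.update hhat k x j)))
          + Real.log (gauss1 σL (gL (W L) (Function.update hhat k x (L - 1))) a)) + C)
        (hhat k) = 0)
    (zhat : (l : ℕ) → EuclideanSpace ℝ (Fin (n l)))
    (hzhat : ∀ k ∈ Finset.Icc 1 (L - 1),
      zhat k = (σ k)⁻¹ • (hhat k - g k (W k) (hhat (k - 1))))
    (hamu : a ≠ gL (W L) (hhat (L - 1))) :
    (∀ l ∈ Finset.Icc 1 (L - 1),
      ((Astar s - gL (W L) (hhat (L - 1))) / (a - gL (W L) (hhat (L - 1)))) •
        gradient (fun w => Real.log (gaussDensity (σ l) (g l w (hhat (l - 1))) (hhat l))) (W l)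
        = (-(2 * σL ^ 2)⁻¹) •
          gradient (fun w : EuclideanSpace ℝ (Fin (dpar l)) =>
            (Astar s -
              gL (W L) (reparam n dpar g σ (Function.update W l w) s zhat (L - 1))) ^ 2) (W l))
    ∧ ((Astar s - gL (W L) (hhat (L - 1))) / (a - gL (W L) (hhat (L - 1)))) •
        gradient (fun w => Real.log (gauss1 σL (gL w (hhat (L - 1))) a)) (W L)
        = (-(2 * σL ^ 2)⁻¹) •
          gradient (fun w =>
            (Astar s - gL w (reparam n dpar g σ W s zhat (L - 1))) ^ 2) (W L) := by
  have hamu' : a - gL (W L) (hhat (L - 1)) ≠ 0 := sub_ne_zero.2 hamu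
  have hmul : (Astar s - gL (W L) (hhat (L - 1))) / (a - gL (W L) (hhat (L - 1)))
      * (a - gL (W L) (hhat (L - 1))) = Astar s - gL (W L) (hhat (L - 1)) :=
    div_mul_cancel₀ _ hamu'
  have hzhat' : ∀ k, k + 1 ∈ Finset.Icc 1 (L - 1) →
      zhat (k + 1) = (σ (k + 1))⁻¹ • (hhat (k + 1) - g (k + 1) (W (k + 1)) (hhat k)) :=
    fun k h => hzhat (k + 1) h
  -- the reparametrization reproduces hhat
  have hR : ∀ k, k ≤ L - 1 → reparam n dpar g σ W s zhat k = hhat k := by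
    intro k
    induction k with
    | zero => intro _; show s = hhat 0; exact hs.symm
    | succ k ih =>
      intro hk
      have h1 : k + 1 ∈ Finset.Icc 1 (L - 1) := by simp only [Finset.mem_Icc]; omega
      simp only [reparam]
      rw [ih (by omega), hzhat' k h1, smul_smul, mul_inv_cancel₀ (hσ (k + 1) h1).ne',
        one_smul]
      abel
  have hRu : ∀ (l : ℕ) (w : EuclideanSpace ℝ (Fin (dpar l))), ∀ k, k ≤ L - 1 → k < l →
      reparam n dpar g σ (Function.update W l w) s zhat k = hhat k := by
    intro l w k
    induction k with
    | zero => intro _ _; show s = hhat 0; exact hs.symm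
    | succ k ih =>
      intro hk hkl
      have h1 : k + 1 ∈ Finset.Icc 1 (L - 1) := by simp only [Finset.mem_Icc]; omega
      simp only [reparam]
      rw [Function.update_of_ne (by omega : k + 1 ≠ l), ih (by omega) (by omega),
        hzhat' k h1, smul_smul, mul_inv_cancel₀ (hσ (k + 1) h1).ne', one_smul]
      abel
  -- stationarity, middle layers
  have hS1 : ∀ k, 1 ≤ k → k + 1 ≤ L - 1 → ∀ v : EuclideanSpace ℝ (Fin (n k)),
      (σ k ^ 2)⁻¹ * ⟪hhat k - g k (W k) (hhat (k - 1)), v⟫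
        = (σ (k + 1) ^ 2)⁻¹ * ⟪hhat (k + 1) - g (k + 1) (W (k + 1)) (hhat k),
            fderiv ℝ (g (k + 1) (W (k + 1))) (hhat k) v⟫ := by
    intro k hk1 hk2 v
    have hkmem : k ∈ Finset.Icc 1 (L - 1) := by simp only [Finset.mem_Icc]; omega
    have hk1mem : k + 1 ∈ Finset.Icc 1 (L - 1) := by simp only [Finset.mem_Icc]; omega
    set Tk : EuclideanSpace ℝ (Fin (n k)) →L[ℝ] ℝ :=
      (σ k ^ 2)⁻¹ • ((innerSL ℝ (hhat k - g k (W k) (hhat (k - 1)))).comp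
        ((0 : EuclideanSpace ℝ (Fin (n k)) →L[ℝ] EuclideanSpace ℝ (Fin (n k)))
          - ContinuousLinearMap.id ℝ _)) with hTkdef
    set Tk1 : EuclideanSpace ℝ (Fin (n k)) →L[ℝ] ℝ :=
      (σ (k + 1) ^ 2)⁻¹ • ((innerSL ℝ (hhat (k + 1) - g (k + 1) (W (k + 1)) (hhat k))).comp
        (fderiv ℝ (g (k + 1) (W (k + 1))) (hhat k) - 0)) with hTk1def
    have hterm : ∀ j ∈ Finset.Icc 1 (L - 1),
        HasFDerivAt (fun x : EuclideanSpace ℝ (Fin (n k)) =>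
            Real.log (gaussDensity (σ j) (g j (W j) (Function.update hhat k x (j - 1)))
              (Function.update hhat k x j)))
          (if j = k then Tk else if j = k + 1 then Tk1 else 0) (hhat k) := by
      intro j hj
      rcases eq_or_ne j k with rfl | hjk
      · rw [if_pos rfl]
        have hfun : (fun x : EuclideanSpace ℝ (Fin (n j)) =>
            Real.log (gaussDensity (σ j) (g j (W j) (Function.update hhat j x (j - 1)))
              (Function.update hhat j x j)))
            = fun x => Real.log (gaussDensity (σ j) (g j (W j) (hhat (j - 1))) x) := by
          funext x
          rw [Function.update_of_ne (by omega : j - 1 ≠ j), Function.update_self]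
        rw [hfun]
        exact hasFDerivAt_log_gaussDensity (hσ j hj) (hasFDerivAt_const _ _)
          (my_hasFDerivAt_id _)
      · rcases eq_or_ne j (k + 1) with rfl | hjk1
        · rw [if_neg hjk, if_pos rfl]
          have hfun : (fun x : EuclideanSpace ℝ (Fin (n k)) =>
              Real.log (gaussDensity (σ (k + 1))
                (g (k + 1) (W (k + 1)) (Function.update hhat k x (k + 1 - 1)))
                (Function.update hhat k x (k + 1))))
              = fun x => Real.log (gaussDensity (σ (k + 1)) (g (k + 1) (W (k + 1)) x)
                  (hhat (k + 1))) := by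
            funext x
            rw [Function.update_of_ne (by omega : k + 1 ≠ k)]
            exact congrArg (fun z => Real.log (gaussDensity (σ (k + 1))
              (g (k + 1) (W (k + 1)) z) (hhat (k + 1)))) (Function.update_self k x hhat)
          rw [hfun]
          exact hasFDerivAt_log_gaussDensity (hσ _ hk1mem)
            ((hgdiff₁ (k + 1) hk1mem (W (k + 1)) (hhat k)).hasFDerivAt)
            (hasFDerivAt_const _ _)
        · rw [if_neg hjk, if_neg hjk1]
          have hj1 : 1 ≤ j := (Finset.mem_Icc.mp hj).1
          have hfun : (fun x : EuclideanSpace ℝ (Fin (n k)) =>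
              Real.log (gaussDensity (σ j) (g j (W j) (Function.update hhat k x (j - 1)))
                (Function.update hhat k x j)))
              = fun _ => Real.log (gaussDensity (σ j) (g j (W j) (hhat (j - 1))) (hhat j)) := by
            funext x
            rw [Function.update_of_ne (by omega : j - 1 ≠ k), Function.update_of_ne hjk]
          rw [hfun]
          exact hasFDerivAt_const _ _
    have hout : HasFDerivAt (fun x : EuclideanSpace ℝ (Fin (n k)) =>
        Real.log (gauss1 σL (gL (W L) (Function.update hhat k x (L - 1))) a))
        (0 : EuclideanSpace ℝ (Fin (n k)) →L[ℝ] ℝ) (hhat k) := by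
      have hfun : (fun x : EuclideanSpace ℝ (Fin (n k)) =>
          Real.log (gauss1 σL (gL (W L) (Function.update hhat k x (L - 1))) a))
          = fun _ => Real.log (gauss1 σL (gL (W L) (hhat (L - 1))) a) := by
        funext x
        rw [Function.update_of_ne (by omega : L - 1 ≠ k)]
      rw [hfun]
      exact hasFDerivAt_const _ _
    have hbig := (((HasFDerivAt.fun_sum hterm).fun_add hout).fun_neg).add_const C
    have h3 : HasGradientAt (fun x : EuclideanSpace ℝ (Fin (n k)) =>
        -((∑ j ∈ Finset.Icc 1 (L - 1),
            Real.log (gaussDensity (σ j) (g j (W j) (Function.update hhat k x (j - 1)))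
              (Function.update hhat k x j)))
          + Real.log (gauss1 σL (gL (W L) (Function.update hhat k x (L - 1))) a)) + C)
        (0 : EuclideanSpace ℝ (Fin (n k))) (hhat k) := by
      rw [← hstat k hkmem]
      exact hbig.differentiableAt.hasGradientAt
    have huniq := hbig.hasGradientAt.unique h3
    have h5 : -((∑ j ∈ Finset.Icc 1 (L - 1), if j = k then Tk else if j = k + 1 then Tk1 else 0)
        + 0) = (0 : EuclideanSpace ℝ (Fin (n k)) →L[ℝ] ℝ) := by
      exact (LinearIsometryEquiv.map_eq_zero_iff _).mp huniq
    have hsumif : (∑ j ∈ Finset.Icc 1 (L - 1),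
        if j = k then Tk else if j = k + 1 then Tk1 else 0) = Tk + Tk1 := by
      have hsplit : ∀ j, (if j = k then Tk else if j = k + 1 then Tk1 else 0)
          = (if j = k then Tk else 0) + (if j = k + 1 then Tk1 else 0) := by
        intro j
        by_cases h1 : j = k
        · simp [h1, (by omega : k ≠ k + 1)]
        · by_cases h2 : j = k + 1 <;> simp [h1, h2]
      rw [Finset.sum_congr rfl fun j _ => hsplit j, Finset.sum_add_distrib,
        Finset.sum_ite_eq', Finset.sum_ite_eq', if_pos hkmem, if_pos hk1mem]
    rw [hsumif] at h5
    have h6 := ContinuousLinearMap.ext_iff.mp h5 v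
    simp only [ContinuousLinearMap.neg_apply, ContinuousLinearMap.add_apply,
      ContinuousLinearMap.zero_apply, ContinuousLinearMap.smul_apply,
      ContinuousLinearMap.comp_apply, ContinuousLinearMap.sub_apply,
      ContinuousLinearMap.coe_id', id_eq, zero_sub, sub_zero, innerSL_apply_apply, smul_eq_mul,
      inner_neg_right, add_zero, neg_eq_zero, hTkdef, hTk1def] at h6
    linear_combination -h6
  -- stationarity, last layer
  have hS2 : 1 ≤ L - 1 → ∀ v : EuclideanSpace ℝ (Fin (n (L - 1))),
      (σ (L - 1) ^ 2)⁻¹ * ⟪hhat (L - 1) - g (L - 1) (W (L - 1)) (hhat (L - 1 - 1)), v⟫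
        = (σL ^ 2)⁻¹ * (a - gL (W L) (hhat (L - 1)))
            * fderiv ℝ (gL (W L)) (hhat (L - 1)) v := by
    intro hL1 v
    have hkmem : L - 1 ∈ Finset.Icc 1 (L - 1) := by simp only [Finset.mem_Icc]; omega
    set Tk : EuclideanSpace ℝ (Fin (n (L - 1))) →L[ℝ] ℝ :=
      (σ (L - 1) ^ 2)⁻¹ • ((innerSL ℝ (hhat (L - 1)
          - g (L - 1) (W (L - 1)) (hhat (L - 1 - 1)))).comp
        ((0 : EuclideanSpace ℝ (Fin (n (L - 1))) →L[ℝ] EuclideanSpace ℝ (Fin (n (L - 1))))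
          - ContinuousLinearMap.id ℝ _)) with hTkdef
    set Dout : EuclideanSpace ℝ (Fin (n (L - 1))) →L[ℝ] ℝ :=
      ((σL ^ 2)⁻¹ * (a - gL (W L) (hhat (L - 1)))) • fderiv ℝ (gL (W L)) (hhat (L - 1))
      with hDoutdef
    have hterm : ∀ j ∈ Finset.Icc 1 (L - 1),
        HasFDerivAt (fun x : EuclideanSpace ℝ (Fin (n (L - 1))) =>
            Real.log (gaussDensity (σ j) (g j (W j) (Function.update hhat (L - 1) x (j - 1)))
              (Function.update hhat (L - 1) x j)))
          (if j = L - 1 then Tk else 0) (hhat (L - 1)) := by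
      intro j hj
      rcases eq_or_ne j (L - 1) with rfl | hjk
      · rw [if_pos rfl]
        have hfun : (fun x : EuclideanSpace ℝ (Fin (n (L - 1))) =>
            Real.log (gaussDensity (σ (L - 1))
              (g (L - 1) (W (L - 1)) (Function.update hhat (L - 1) x (L - 1 - 1)))
              (Function.update hhat (L - 1) x (L - 1))))
            = fun x => Real.log (gaussDensity (σ (L - 1))
                (g (L - 1) (W (L - 1)) (hhat (L - 1 - 1))) x) := by
          funext x
          rw [Function.update_of_ne (by omega : L - 1 - 1 ≠ L - 1), Function.update_self]
        rw [hfun]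
        exact hasFDerivAt_log_gaussDensity (hσ _ hkmem) (hasFDerivAt_const _ _)
          (my_hasFDerivAt_id _)
      · rw [if_neg hjk]
        have hj1 : 1 ≤ j := (Finset.mem_Icc.mp hj).1
        have hjL : j ≤ L - 1 := (Finset.mem_Icc.mp hj).2
        have hfun : (fun x : EuclideanSpace ℝ (Fin (n (L - 1))) =>
            Real.log (gaussDensity (σ j) (g j (W j) (Function.update hhat (L - 1) x (j - 1)))
              (Function.update hhat (L - 1) x j)))
            = fun _ => Real.log (gaussDensity (σ j) (g j (W j) (hhat (j - 1))) (hhat j)) := by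
          funext x
          rw [Function.update_of_ne (by omega : j - 1 ≠ L - 1), Function.update_of_ne hjk]
        rw [hfun]
        exact hasFDerivAt_const _ _
    have hout : HasFDerivAt (fun x : EuclideanSpace ℝ (Fin (n (L - 1))) =>
        Real.log (gauss1 σL (gL (W L) (Function.update hhat (L - 1) x (L - 1))) a))
        Dout (hhat (L - 1)) := by
      have hfun : (fun x : EuclideanSpace ℝ (Fin (n (L - 1))) =>
          Real.log (gauss1 σL (gL (W L) (Function.update hhat (L - 1) x (L - 1))) a))
          = fun x => Real.log (gauss1 σL (gL (W L) x) a) := by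
        funext x
        rw [Function.update_self]
      rw [hfun, hDoutdef]
      exact hasFDerivAt_log_gauss1 hσL a ((hgLdiff₁ (W L)) (hhat (L - 1))).hasFDerivAt
    have hbig := (((HasFDerivAt.fun_sum hterm).fun_add hout).fun_neg).add_const C
    have h3 : HasGradientAt (fun x : EuclideanSpace ℝ (Fin (n (L - 1))) =>
        -((∑ j ∈ Finset.Icc 1 (L - 1),
            Real.log (gaussDensity (σ j) (g j (W j) (Function.update hhat (L - 1) x (j - 1)))
              (Function.update hhat (L - 1) x j)))
          + Real.log (gauss1 σL (gL (W L) (Function.update hhat (L - 1) x (L - 1))) a)) + C)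
        (0 : EuclideanSpace ℝ (Fin (n (L - 1)))) (hhat (L - 1)) := by
      rw [← hstat (L - 1) hkmem]
      exact hbig.differentiableAt.hasGradientAt
    have huniq := hbig.hasGradientAt.unique h3
    have h5 : -((∑ j ∈ Finset.Icc 1 (L - 1), if j = L - 1 then Tk else 0) + Dout)
        = (0 : EuclideanSpace ℝ (Fin (n (L - 1))) →L[ℝ] ℝ) := by
      exact (LinearIsometryEquiv.map_eq_zero_iff _).mp huniq
    have hsumif : (∑ j ∈ Finset.Icc 1 (L - 1), if j = L - 1 then Tk else 0) = Tk := by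
      rw [Finset.sum_ite_eq', if_pos hkmem]
    rw [hsumif] at h5
    have h6 := ContinuousLinearMap.ext_iff.mp h5 v
    simp only [ContinuousLinearMap.neg_apply, ContinuousLinearMap.add_apply,
      ContinuousLinearMap.zero_apply, ContinuousLinearMap.smul_apply,
      ContinuousLinearMap.comp_apply, ContinuousLinearMap.sub_apply,
      ContinuousLinearMap.coe_id', id_eq, zero_sub, sub_zero, innerSL_apply_apply, smul_eq_mul,
      inner_neg_right, neg_eq_zero, hTkdef, hDoutdef] at h6
    linear_combination -h6
  constructor
  · -- middle layers
    intro l hl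
    have hl1 : 1 ≤ l := (Finset.mem_Icc.mp hl).1
    have hlL : l ≤ L - 1 := (Finset.mem_Icc.mp hl).2
    have hσl := hσ l hl
    have hrep_l : ∀ w' : EuclideanSpace ℝ (Fin (dpar l)),
        reparam n dpar g σ (Function.update W l w') s zhat l
          = g l w' (hhat (l - 1)) + σ l • zhat l := by
      obtain ⟨m, rfl⟩ : ∃ m, l = m + 1 := ⟨l - 1, by omega⟩
      intro w'
      simp only [reparam, Function.update_self]
      rw [hRu (m + 1) w' m (by omega) (by omega)]
      rfl
    -- the chain rule induction
    have key : ∀ k, l ≤ k → k ≤ L - 1 →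
        ∃ Φ : EuclideanSpace ℝ (Fin (dpar l)) →L[ℝ] EuclideanSpace ℝ (Fin (n k)),
          HasFDerivAt (fun w => reparam n dpar g σ (Function.update W l w) s zhat k) Φ (W l) ∧
          ∀ v, (σ k ^ 2)⁻¹ * ⟪hhat k - g k (W k) (hhat (k - 1)), Φ v⟫
            = (σ l ^ 2)⁻¹ * ⟪hhat l - g l (W l) (hhat (l - 1)),
                fderiv ℝ (fun w => g l w (hhat (l - 1))) (W l) v⟫ := by
      intro k hlk
      induction k, hlk using Nat.le_induction with
      | base =>
        intro _
        refine ⟨fderiv ℝ (fun w => g l w (hhat (l - 1))) (W l), ?_, fun v => rfl⟩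
        have hfun : (fun w => reparam n dpar g σ (Function.update W l w) s zhat l)
            = fun w => g l w (hhat (l - 1)) + σ l • zhat l := funext hrep_l
        rw [hfun]
        exact ((hgdiff₂ l hl (hhat (l - 1))) (W l)).hasFDerivAt.add_const _
      | succ k hlk ih =>
        intro hk1
        obtain ⟨Φ, hΦ, hinner⟩ := ih (by omega)
        have hmemk1 : k + 1 ∈ Finset.Icc 1 (L - 1) := by simp only [Finset.mem_Icc]; omega
        have hBfd : HasFDerivAt (g (k + 1) (W (k + 1)))
            (fderiv ℝ (g (k + 1) (W (k + 1))) (hhat k))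
            ((fun w => reparam n dpar g σ (Function.update W l w) s zhat k) (W l)) := by
          have hv : (fun w => reparam n dpar g σ (Function.update W l w) s zhat k) (W l)
              = hhat k := by
            simp only [Function.update_eq_self]
            exact hR k (by omega)
          rw [hv]
          exact ((hgdiff₁ (k + 1) hmemk1 (W (k + 1))) (hhat k)).hasFDerivAt
        refine ⟨(fderiv ℝ (g (k + 1) (W (k + 1))) (hhat k)).comp Φ, ?_, ?_⟩
        · have hfun1 : (fun w => reparam n dpar g σ (Function.update W l w) s zhat (k + 1))
              = fun w => g (k + 1) (W (k + 1))
                  (reparam n dpar g σ (Function.update W l w) s zhat k)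
                  + σ (k + 1) • zhat (k + 1) := by
            funext w
            simp only [reparam]
            rw [Function.update_of_ne (by omega : k + 1 ≠ l)]
          rw [hfun1]
          exact (hBfd.comp (W l) hΦ).add_const _
        · intro v
          have golden : (σ (k + 1) ^ 2)⁻¹ * ⟪hhat (k + 1) - g (k + 1) (W (k + 1)) (hhat k),
              fderiv ℝ (g (k + 1) (W (k + 1))) (hhat k) (Φ v)⟫
              = (σ l ^ 2)⁻¹ * ⟪hhat l - g l (W l) (hhat (l - 1)),
                  fderiv ℝ (fun w => g l w (hhat (l - 1))) (W l) v⟫ := by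
            rw [← hS1 k (by omega) (by omega) (Φ v)]
            exact hinner v
          exact golden
    obtain ⟨Φ, hΦ, hinner⟩ := key (L - 1) hlL le_rfl
    -- LHS gradient
    have e1 : gradient (fun w => Real.log (gaussDensity (σ l) (g l w (hhat (l - 1)))
        (hhat l))) (W l)
        = (InnerProductSpace.toDual ℝ (EuclideanSpace ℝ (Fin (dpar l)))).symm
            ((σ l ^ 2)⁻¹ • ((innerSL ℝ (hhat l - g l (W l) (hhat (l - 1)))).comp
              (fderiv ℝ (fun w => g l w (hhat (l - 1))) (W l) - 0))) :=
      (hasFDerivAt_log_gaussDensity hσl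
        ((hgdiff₂ l hl (hhat (l - 1))) (W l)).hasFDerivAt
        (hasFDerivAt_const (hhat l) (W l))).hasGradientAt.gradient
    -- RHS gradient
    have hgLfd : HasFDerivAt (gL (W L)) (fderiv ℝ (gL (W L)) (hhat (L - 1)))
        ((fun w => reparam n dpar g σ (Function.update W l w) s zhat (L - 1)) (W l)) := by
      have hv : (fun w => reparam n dpar g σ (Function.update W l w) s zhat (L - 1)) (W l)
          = hhat (L - 1) := by
        simp only [Function.update_eq_self]
        exact hR (L - 1) le_rfl
      rw [hv]
      exact ((hgLdiff₁ (W L)) (hhat (L - 1))).hasFDerivAt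
    have hcomp := hgLfd.comp (W l) hΦ
    have e2 := (hasFDerivAt_sq_sub (c := Astar s) hcomp).hasGradientAt.gradient
    simp only [Function.comp_def, Function.update_eq_self, hR (L - 1) le_rfl] at e2
    rw [e1, e2]
    apply ext_inner_right ℝ
    intro v
    rw [real_inner_smul_left, real_inner_smul_left, InnerProductSpace.toDual_symm_apply,
      InnerProductSpace.toDual_symm_apply]
    simp only [ContinuousLinearMap.smul_apply, ContinuousLinearMap.comp_apply,
      ContinuousLinearMap.sub_apply, ContinuousLinearMap.zero_apply, sub_zero,
      innerSL_apply_apply, smul_eq_mul]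
    rw [← hinner v, hS2 (by omega) (Φ v)]
    linear_combination ((σL ^ 2)⁻¹ * (fderiv ℝ (gL (W L)) (hhat (L - 1))) (Φ v)) * hmul
  · -- last layer
    rw [hR (L - 1) le_rfl]
    have hF2 : HasFDerivAt (fun w => gL w (hhat (L - 1)))
        (fderiv ℝ (fun w => gL w (hhat (L - 1))) (W L)) (W L) :=
      ((hgLdiff₂ (hhat (L - 1))) (W L)).hasFDerivAt
    have e1 : gradient (fun w => Real.log (gauss1 σL (gL w (hhat (L - 1))) a)) (W L)
        = (InnerProductSpace.toDual ℝ (EuclideanSpace ℝ (Fin (dpar L)))).symm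
            (((σL ^ 2)⁻¹ * (a - gL (W L) (hhat (L - 1)))) •
              fderiv ℝ (fun w => gL w (hhat (L - 1))) (W L)) :=
      (hasFDerivAt_log_gauss1 hσL a hF2).hasGradientAt.gradient
    have e2 : gradient (fun w => (Astar s - gL w (hhat (L - 1))) ^ 2) (W L)
        = (InnerProductSpace.toDual ℝ (EuclideanSpace ℝ (Fin (dpar L)))).symm
            ((-2 * (Astar s - gL (W L) (hhat (L - 1)))) •
              fderiv ℝ (fun w => gL w (hhat (L - 1))) (W L)) :=
      (hasFDerivAt_sq_sub hF2).hasGradientAt.gradient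
    rw [e1, e2]
    apply ext_inner_right ℝ
    intro v
    rw [real_inner_smul_left, real_inner_smul_left, InnerProductSpace.toDual_symm_apply,
      InnerProductSpace.toDual_symm_apply]
    simp only [ContinuousLinearMap.smul_apply, smul_eq_mul]
    linear_combination ((σL ^ 2)⁻¹
      * (fderiv ℝ (fun w => gL w (hhat (L - 1))) (W L)) v) * hmul
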